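/- Let λ > 0. The Gauss equation in codimension 1 with curvature components R_{1212} = −(3λ² + 1), R_{1313} = λ² − 1, R_{2323} = λ² − 1, R_{1213} = −2λ, R_{1223} = R_{1323} = 0 (these are the curvature components of the solvable Lie algebra r₃ with its Milnor-type orthonormal frame with parameter λ) has a solution if and only if 1/√3 < λ < 1. -/

import Mathlib

/-- A solution of the Gauss equation in codimension 1 exists for the given curvature
components. (The family `h i j` is encoded by the six entries `h11, h12, h13, h22,
h23, h33`, symmetry `h i j = h j i` being automatic.) -/
def GaussSolvable (R1212 R1313 R2323 R1213 R1223 R1323 : ℝ) : Prop :=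
  ∃ h11 h12 h13 h22 h23 h33 : ℝ,
    h11 * h22 - h12 ^ 2 = R1212 ∧
    h11 * h33 - h13 ^ 2 = R1313 ∧
    h22 * h33 - h23 ^ 2 = R2323 ∧
    h11 * h23 - h13 * h12 = R1213 ∧
    h12 * h23 - h13 * h22 = R1223 ∧
    h12 * h33 - h13 * h23 = R1323

set_option maxHeartbeats 1000000

/-- Proposition 4.5: the metric Lie algebra `(r₃, ⟨·,·⟩_λ)` has a solution of the
Gauss equation in codimension 1 if and only if `1/√3 < λ < 1`. -/
theorem r3_gauss_solvable_iff (l : ℝ) (hl : l > 0) :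
    GaussSolvable (-(3 * l ^ 2 + 1)) (l ^ 2 - 1) (l ^ 2 - 1) (-2 * l) 0 0 ↔
      1 / Real.sqrt 3 < l ∧ l < 1 := by
  have h3pos : (0:ℝ) < Real.sqrt 3 := Real.sqrt_pos.2 (by norm_num)
  have h3sq : (1 / Real.sqrt 3) ^ 2 = 1 / 3 := by
    rw [div_pow, one_pow, Real.sq_sqrt] <;> norm_num
  constructor
  · rintro ⟨h11, h12, h13, h22, h23, h33, e1, e2, e3, e4, e5, e6⟩
    set d : ℝ := h11*h22*h33 + 2*h12*h13*h23 - h11*h23^2 - h22*h13^2 - h33*h12^2 with hd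
    have p1 : d * h11 = (1 - 3*l^2) * (1 + l^2) := by
      linear_combination (h11*h33 - h13^2) * e1 + (-(3*l^2+1)) * e2
        - (h11*h23 - h13*h12 - 2*l) * e4
    have p2 : d * h22 = (1 - l^2) * (3*l^2 + 1) := by
      linear_combination (h11*h22 - h12^2) * e3 + (l^2 - 1) * e1
        - (h12*h23 - h13*h22) * e5
    have q1 : d * h12 = 0 := by
      linear_combination (h12*h33 - h13*h23) * e1 + (-(3*l^2+1)) * e6
        - (h12*h23 - h13*h22) * e4 + (2*l) * e5
    have hd2 : (3*l^2+1) * d^2 = (3*l^2+1) * ((3*l^2-1) * (1-l^2) * (1+l^2)) := by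
      linear_combination d^2 * e1 - (d*h22) * p1 - ((1-3*l^2)*(1+l^2)) * p2 + (d*h12) * q1
    have hD : d^2 = (3*l^2-1) * (1-l^2) * (1+l^2) :=
      mul_left_cancel₀ (by positivity) hd2
    constructor
    · by_contra hc
      push_neg at hc
      have hl2 : l^2 ≤ 1/3 := by nlinarith [h3sq, h3pos]
      have f1 : (3*l^2 - 1) * (1 - l^2) ≤ 0 :=
        mul_nonpos_of_nonpos_of_nonneg (by nlinarith) (by nlinarith)
      have f2 : (3*l^2 - 1) * (1 - l^2) * (1 + l^2) ≤ 0 :=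
        mul_nonpos_of_nonpos_of_nonneg f1 (by positivity)
      have hd0 : d = 0 := by nlinarith [sq_nonneg d]
      rw [hd0] at p2
      nlinarith
    · by_contra hc
      push_neg at hc
      have f1 : (3*l^2 - 1) * (1 - l^2) ≤ 0 :=
        mul_nonpos_of_nonneg_of_nonpos (by nlinarith) (by nlinarith)
      have f2 : (3*l^2 - 1) * (1 - l^2) * (1 + l^2) ≤ 0 :=
        mul_nonpos_of_nonpos_of_nonneg f1 (by positivity)
      have hd0 : d = 0 := by nlinarith [sq_nonneg d]
      rw [hd0] at p1
      nlinarith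
  · rintro ⟨hlo, hhi⟩
    have hl2lo : 1/3 < l^2 := by
      nlinarith [h3sq, mul_self_lt_mul_self (by positivity : (0:ℝ) ≤ 1 / Real.sqrt 3) hlo]
    have hDpos : (0:ℝ) < (3*l^2-1) * (1-l^2) * (1+l^2) :=
      mul_pos (mul_pos (by nlinarith) (by nlinarith)) (by positivity)
    set s : ℝ := Real.sqrt ((3*l^2-1) * (1-l^2) * (1+l^2)) with hs
    have hssq : s^2 = (3*l^2-1) * (1-l^2) * (1+l^2) := Real.sq_sqrt hDpos.le
    have hspos : 0 < s := Real.sqrt_pos.2 hDpos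
    have hsne : s ≠ 0 := hspos.ne'
    refine ⟨(1-3*l^2)*(1+l^2)/s, 0, 0, (1-l^2)*(3*l^2+1)/s, 2*l*(1-l^2)/s,
      (1-l^2)^2/s, ?_, ?_, ?_, ?_, ?_, ?_⟩
    · field_simp
      linear_combination (3*l^2+1) * hssq
    · field_simp
      linear_combination (1 - l^2) * hssq
    · field_simp
      linear_combination (1 - l^2) * hssq
    · field_simp
      linear_combination (2*l) * hssq
    · ring
    · ring
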